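/- For the hexagonal lattice Λ ⊂ ℝ² spanned by α = (1,0) and β = (1/2, √3/2), with the Euclidean metric, the systole of the flat torus ℝ²/Λ equals 1 and its area equals √3/2; hence area = (√3/2)·sys², so the equilateral flat torus attains equality in Loewner's inequality. -/

import Mathlib

/-!
STATEMENT 6: For the hexagonal lattice Λ ⊂ ℝ² spanned by α = (1,0) and β = (1/2, √3/2),
with the Euclidean metric, the systole of ℝ²/Λ equals 1 and its area (= covolume of Λ,
the absolute value of the determinant of the basis matrix) equals √3/2; hence
area = (√3/2)·sys², so the equilateral flat torus attains equality in Loewner's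
inequality.
-/

open Real

noncomputable def hexAlpha : EuclideanSpace ℝ (Fin 2) := WithLp.toLp 2 ![1, 0]
noncomputable def hexBeta : EuclideanSpace ℝ (Fin 2) := WithLp.toLp 2 ![1 / 2, Real.sqrt 3 / 2]

/-- The hexagonal (equilateral) lattice. -/
noncomputable def hexLat : AddSubgroup (EuclideanSpace ℝ (Fin 2)) :=
  AddSubgroup.closure {hexAlpha, hexBeta}

/-- Systole of the Euclidean flat torus ℝ²/Λ: least Euclidean norm of a
nonzero lattice vector. -/
noncomputable def hexSys : ℝ :=
  sInf ((fun l => ‖l‖) '' {l : EuclideanSpace ℝ (Fin 2) | l ∈ hexLat ∧ l ≠ 0})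

/-- Area of the flat torus = covolume of Λ = |det of the basis matrix|. -/
noncomputable def hexArea : ℝ :=
  |Matrix.det !![(1 : ℝ), 0; 1 / 2, Real.sqrt 3 / 2]|

lemma hex_mem (l : EuclideanSpace ℝ (Fin 2)) (hl : l ∈ hexLat) :
    ∃ m n : ℤ, l = m • hexAlpha + n • hexBeta := by
  induction hl using AddSubgroup.closure_induction with
  | mem x hx =>
    simp only [Set.mem_insert_iff, Set.mem_singleton_iff] at hx
    rcases hx with h | h
    · exact ⟨1, 0, by simp [h]⟩
    · exact ⟨0, 1, by simp [h]⟩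
  | zero => exact ⟨0, 0, by simp⟩
  | add x y hx hy ihx ihy =>
    obtain ⟨m, n, rfl⟩ := ihx
    obtain ⟨m', n', rfl⟩ := ihy
    exact ⟨m + m', n + n', by push_cast; module⟩
  | neg x hx ihx =>
    obtain ⟨m, n, rfl⟩ := ihx
    exact ⟨-m, -n, by push_cast; module⟩

lemma hex_normsq (m n : ℤ) :
    ‖((m : ℤ) • hexAlpha + (n : ℤ) • hexBeta : EuclideanSpace ℝ (Fin 2))‖ ^ 2
      = ((m ^ 2 + m * n + n ^ 2 : ℤ) : ℝ) := by
  rw [← Real.sqrt_sq (norm_nonneg _), Real.sq_sqrt (by positivity)]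
  rw [EuclideanSpace.norm_eq]
  rw [Real.sq_sqrt (by positivity)]
  have h3 : Real.sqrt 3 ^ 2 = 3 := Real.sq_sqrt (by norm_num)
  simp [Fin.sum_univ_two, hexAlpha, hexBeta, PiLp.add_apply, PiLp.smul_apply,
    zsmul_eq_mul]
  nlinarith [h3]

theorem hexagonal_torus_loewner_equality :
    hexSys = 1 ∧
    hexArea = Real.sqrt 3 / 2 ∧
    hexArea = (Real.sqrt 3 / 2) * hexSys ^ 2 := by
  have hαmem : hexAlpha ∈ hexLat := AddSubgroup.subset_closure (by simp)
  have hαnorm : ‖hexAlpha‖ = 1 := by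
    rw [EuclideanSpace.norm_eq]
    simp [Fin.sum_univ_two, hexAlpha]
  have hαne : hexAlpha ≠ 0 := by
    intro h
    have := congrArg (fun v : EuclideanSpace ℝ (Fin 2) => v 0) h
    simp [hexAlpha] at this
  have hlb : ∀ r ∈ (fun l => ‖l‖) '' {l : EuclideanSpace ℝ (Fin 2) | l ∈ hexLat ∧ l ≠ 0},
      (1 : ℝ) ≤ r := by
    rintro r ⟨l, ⟨hl, hne⟩, rfl⟩
    obtain ⟨m, n, rfl⟩ := hex_mem l hl
    have hmn : ¬ (m = 0 ∧ n = 0) := by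
      rintro ⟨rfl, rfl⟩; simp at hne
    have hkey : (1 : ℤ) ≤ m ^ 2 + m * n + n ^ 2 := by
      rcases lt_or_ge 0 (m ^ 2 + m * n + n ^ 2) with h | h
      · omega
      · exfalso
        apply hmn
        constructor <;> nlinarith [sq_nonneg (2*m + n), sq_nonneg (2*n + m), sq_nonneg m, sq_nonneg n]
    have h2 := hex_normsq m n
    nlinarith [norm_nonneg ((m : ℤ) • hexAlpha + (n : ℤ) • hexBeta), h2,
      (by exact_mod_cast hkey : (1:ℝ) ≤ ((m ^ 2 + m * n + n ^ 2 : ℤ) : ℝ))]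
  have hsys : hexSys = 1 := by
    apply le_antisymm
    · exact csInf_le ⟨1, fun r hr => hlb r hr⟩ ⟨hexAlpha, ⟨hαmem, hαne⟩, hαnorm⟩
    · exact le_csInf ⟨1, hexAlpha, ⟨hαmem, hαne⟩, hαnorm⟩ hlb
  have harea : hexArea = Real.sqrt 3 / 2 := by
    have : (0:ℝ) ≤ Real.sqrt 3 / 2 := by positivity
    simp [hexArea, Matrix.det_fin_two_of, abs_of_nonneg this]
  exact ⟨hsys, harea, by rw [harea, hsys]; ring⟩
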